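/- Let n = n_x + 1 and let F = (G h) ∈ ℝ^{f×n} satisfy the block structure F = [[G_1, 0],[G_2, h_2]] with G_1 ∈ ℝ^{f_1×n_x}, G_2 ∈ ℝ^{f_2×n_x}, h_2 ∈ ℝ^{f_2}, f = f_1 + f_2, f_2 > 0, where every component of h_2 is strictly negative and G_1 x ≤ 0 implies x = 0. Let z = (z_1, z_2) ∈ ℝ^{f_1}×ℝ^{f_2} be such that P(z) := {(x,y) : Gx + hy ≤ z} is non-empty. Then the function M : ℝ^{n_x} → ℝ ∪ {∞} defined by M(x) = max_{i ∈ {1,…,f_2}} (z_2 − G_2 x)_i / (h_2)_i whenever G_1 x ≤ z_1, and M(x) = ∞ otherwise, satisfies epi(M) = P(z) (and hence is the unique proper compact convex function with this epigraph). -/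

import Mathlib

open Matrix Set MeasureTheory
open scoped Classical Pointwise

noncomputable section

def epiF {nx : ℕ} (M : (Fin nx → ℝ) → EReal) : Set ((Fin nx → ℝ) × ℝ) :=
  {p | M p.1 ≤ (p.2 : EReal)}

def domF {nx : ℕ} (M : (Fin nx → ℝ) → EReal) : Set (Fin nx → ℝ) :=
  {x | M x < ⊤}

def ProperCompactConvex {nx : ℕ} (M : (Fin nx → ℝ) → EReal) : Prop :=
  (∀ x, M x ≠ ⊥) ∧ (domF M).Nonempty ∧ IsCompact (domF M) ∧
    IsClosed (epiF M) ∧ Convex ℝ (epiF M)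

def Pset {nx f : ℕ} (G : Matrix (Fin f) (Fin nx) ℝ) (h : Fin f → ℝ)
    (z : Fin f → ℝ) : Set ((Fin nx → ℝ) × ℝ) :=
  {p | ∀ i, (G *ᵥ p.1) i + h i * p.2 ≤ z i}

def Kcone (nx : ℕ) : Set ((Fin nx → ℝ) × ℝ) := {p | p.1 = 0 ∧ 0 ≤ p.2}

def vertPt {nx f : ℕ} (R : Matrix (Fin nx) (Fin f) ℝ) (s : Fin f → ℝ)
    (z : Fin f → ℝ) : (Fin nx → ℝ) × ℝ := (R *ᵥ z, s ⬝ᵥ z)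

def ConfigTriplet {nx f e v : ℕ} (G : Matrix (Fin f) (Fin nx) ℝ) (h : Fin f → ℝ)
    (E : Matrix (Fin e) (Fin f) ℝ)
    (R : Fin v → Matrix (Fin nx) (Fin f) ℝ) (s : Fin v → Fin f → ℝ) : Prop :=
  ∀ z : Fin f → ℝ,
    Pset G h z = convexHull ℝ (Set.range fun i => vertPt (R i) (s i) z) + Kcone nx
      ↔ ∀ i, (E *ᵥ z) i ≤ 0

def PolyFamily {nx f e : ℕ} (G : Matrix (Fin f) (Fin nx) ℝ) (h : Fin f → ℝ)
    (E : Matrix (Fin e) (Fin f) ℝ) : Set (Set ((Fin nx → ℝ) × ℝ)) :=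
  {P | ∃ z : Fin f → ℝ, (∀ i, (E *ᵥ z) i ≤ 0) ∧ P = Pset G h z}

def indE {n : ℕ} (S : Set (Fin n → ℝ)) (x : Fin n → ℝ) : EReal :=
  if x ∈ S then 0 else ⊤

def IsLCLF {nx nu : ℕ} (A : Matrix (Fin nx) (Fin nx) ℝ) (B : Matrix (Fin nx) (Fin nu) ℝ)
    (𝕏 : Set (Fin nx → ℝ)) (𝕌 : Set (Fin nu → ℝ))
    (L : (Fin nx → ℝ) → (Fin nu → ℝ) → ℝ) (M : (Fin nx → ℝ) → EReal) : Prop :=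
  M 0 = 0 ∧ (∀ x, x ≠ 0 → 0 < M x) ∧ ProperCompactConvex M ∧
    ∀ x, (⨅ u ∈ 𝕌, ((L x u : EReal) + indE 𝕏 x + M (A *ᵥ x + B *ᵥ u))) ≤ M x

def RobustCLF {nx nu : ℕ}
    (𝔻 : Set (Matrix (Fin nx) (Fin nx) ℝ × Matrix (Fin nx) (Fin nu) ℝ × (Fin nx → ℝ)))
    (𝕏 : Set (Fin nx → ℝ)) (𝕌 : Set (Fin nu → ℝ))
    (L : (Fin nx → ℝ) → (Fin nu → ℝ) → ℝ) (M : (Fin nx → ℝ) → EReal) : Prop :=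
  (∀ x, 0 ≤ M x) ∧ ProperCompactConvex M ∧ (∃ xs ∈ 𝕏, M xs = 0) ∧
    ∀ x, (⨅ u ∈ 𝕌, ⨆ d ∈ 𝔻,
      ((L x u : EReal) + indE 𝕏 x + M (d.1 *ᵥ x + d.2.1 *ᵥ u + d.2.2))) ≤ M x

def IsRCI {nx nu : ℕ}
    (𝔻 : Set (Matrix (Fin nx) (Fin nx) ℝ × Matrix (Fin nx) (Fin nu) ℝ × (Fin nx → ℝ)))
    (𝕏 : Set (Fin nx → ℝ)) (𝕌 : Set (Fin nu → ℝ)) (X : Set (Fin nx → ℝ)) : Prop :=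
  X ⊆ 𝕏 ∧ IsCompact X ∧ Convex ℝ X ∧
    ∀ x ∈ X, ∃ u ∈ 𝕌, ∀ d ∈ 𝔻, d.1 *ᵥ x + d.2.1 *ᵥ u + d.2.2 ∈ X

def LPSDwrt {nx nu : ℕ}
    (𝔻 : Set (Matrix (Fin nx) (Fin nx) ℝ × Matrix (Fin nx) (Fin nu) ℝ × (Fin nx → ℝ)))
    (𝕌 : Set (Fin nu → ℝ)) (L : (Fin nx → ℝ) → (Fin nu → ℝ) → ℝ)
    (Xs : Set (Fin nx → ℝ)) : Prop :=
  ∀ x ∈ Xs, ∃ u ∈ 𝕌, L x u = 0 ∧ ∀ d ∈ 𝔻, d.1 *ᵥ x + d.2.1 *ᵥ u + d.2.2 ∈ Xs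

def RobustLambdaContractive {nx nu : ℕ}
    (𝔻 : Set (Matrix (Fin nx) (Fin nx) ℝ × Matrix (Fin nx) (Fin nu) ℝ × (Fin nx → ℝ)))
    (𝕌 : Set (Fin nu → ℝ)) (Xs : Set (Fin nx → ℝ)) (lam : ℝ)
    (X : Set (Fin nx → ℝ)) : Prop :=
  ∀ x ∈ X, ∃ u ∈ 𝕌, ∀ d ∈ 𝔻,
    d.1 *ᵥ x + d.2.1 *ᵥ u + d.2.2 ∈ lam • X + (1 - lam) • Xs

def Jcost {nx nu : ℕ} (A : Matrix (Fin nx) (Fin nx) ℝ) (B : Matrix (Fin nx) (Fin nu) ℝ)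
    (𝕌 : Set (Fin nu → ℝ)) (X : Set (Fin nx → ℝ))
    (L : (Fin nx → ℝ) → (Fin nu → ℝ) → ℝ) (M : (Fin nx → ℝ) → EReal)
    (N : ℕ) (x0 : Fin nx → ℝ) : EReal :=
  sInf {c : EReal | ∃ (xs : ℕ → (Fin nx → ℝ)) (us : ℕ → (Fin nu → ℝ)),
    xs 0 = x0 ∧
    (∀ k < N, us k ∈ 𝕌 ∧ xs k ∈ X ∧ xs (k + 1) = A *ᵥ xs k + B *ᵥ us k) ∧
    c = ((∑ k ∈ Finset.range N, L (xs k) (us k) : ℝ) : EReal) + M (xs N)}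

def Dij {nx nu f : ℕ} (G : Matrix (Fin f) (Fin nx) ℝ)
    (𝔻 : Set (Matrix (Fin nx) (Fin nx) ℝ × Matrix (Fin nx) (Fin nu) ℝ × (Fin nx → ℝ)))
    (xi : Fin nx → ℝ) (c : Fin nu → ℝ) (j : Fin f) : ℝ :=
  sSup ((fun d : Matrix (Fin nx) (Fin nx) ℝ × Matrix (Fin nx) (Fin nu) ℝ × (Fin nx → ℝ) =>
    (G *ᵥ (d.1 *ᵥ xi + d.2.1 *ᵥ c + d.2.2)) j) '' 𝔻)

/-- The explicit piecewise-affine formula from Remark 2. -/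
def Mform {nx f : ℕ} (f1 : ℕ) (hf1 : f1 < f)
    (G : Matrix (Fin f) (Fin nx) ℝ) (h : Fin f → ℝ)
    (z : Fin f → ℝ) (x : Fin nx → ℝ) : EReal :=
  if ∀ i : Fin f, (i : ℕ) < f1 → (G *ᵥ x) i ≤ z i then
    (((Finset.univ.filter fun i : Fin f => f1 ≤ (i : ℕ)).sup'
        ⟨⟨f1, hf1⟩, Finset.mem_filter.mpr ⟨Finset.mem_univ _, le_rfl⟩⟩
        fun i => (z i - (G *ᵥ x) i) / h i : ℝ) : EReal)
  else ⊤


section Stmt1Aux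

private theorem stmt1_epi_eq {nx f : ℕ} (f1 : ℕ)
    (G : Matrix (Fin f) (Fin nx) ℝ) (h : Fin f → ℝ)
    (hf1 : f1 < f)
    (hzero : ∀ i : Fin f, (i : ℕ) < f1 → h i = 0)
    (hneg : ∀ i : Fin f, f1 ≤ (i : ℕ) → h i < 0)
    (z : Fin f → ℝ) :
    epiF (Mform f1 hf1 G h z) = Pset G h z := by
  ext ⟨x, y⟩
  simp only [epiF, Pset, Mform, mem_setOf_eq]
  by_cases hc : ∀ i : Fin f, (i : ℕ) < f1 → (G *ᵥ x) i ≤ z i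
  · rw [if_pos hc, EReal.coe_le_coe_iff]
    refine Iff.trans (Finset.sup'_le_iff _ _) ?_
    constructor
    · intro H i
      by_cases hi : (i : ℕ) < f1
      · rw [hzero i hi]; simpa using hc i hi
      · have hi' : f1 ≤ (i : ℕ) := not_lt.mp hi
        have := H i (Finset.mem_filter.mpr ⟨Finset.mem_univ _, hi'⟩)
        have hh := hneg i hi'
        rw [div_le_iff_of_neg hh] at this
        nlinarith [this]
    · intro H i hi
      have hi' : f1 ≤ (i : ℕ) := (Finset.mem_filter.mp hi).2
      have hh := hneg i hi'
      rw [div_le_iff_of_neg hh]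
      have := H i
      nlinarith [this]
  · rw [if_neg hc]
    push_neg at hc
    obtain ⟨i, hi, hgt⟩ := hc
    constructor
    · intro H; exact absurd H (by simp)
    · intro H
      have := H i
      rw [hzero i hi] at this
      simp at this
      linarith

private theorem stmt1_dom_compact {nx f : ℕ} (f1 : ℕ) (hf1 : f1 < f)
    (G : Matrix (Fin f) (Fin nx) ℝ)
    (hG1 : ∀ x : Fin nx → ℝ, (∀ i : Fin f, (i : ℕ) < f1 → (G *ᵥ x) i ≤ 0) → x = 0)
    (z : Fin f → ℝ) :
    IsCompact {x : Fin nx → ℝ | ∀ i : Fin f, (i : ℕ) < f1 → (G *ᵥ x) i ≤ z i} := by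
  set A := {x : Fin nx → ℝ | ∀ i : Fin f, (i : ℕ) < f1 → (G *ᵥ x) i ≤ z i} with hA
  have hcont : ∀ i : Fin f, Continuous fun x : Fin nx → ℝ => (G *ᵥ x) i := by
    intro i
    simp only [mulVec, dotProduct]
    exact continuous_finset_sum _ fun j _ => (continuous_const.mul (continuous_apply j))
  have hclosed : IsClosed A := by
    have : A = ⋂ i : Fin f, ⋂ (_ : (i:ℕ) < f1), {x | (G *ᵥ x) i ≤ z i} := by
      ext x; simp [hA]
    rw [this]
    exact isClosed_iInter fun i => isClosed_iInter fun _ =>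
      isClosed_le (hcont i) continuous_const
  rw [Metric.isCompact_iff_isClosed_bounded]
  refine ⟨hclosed, ?_⟩
  by_cases hf0 : f1 = 0
  · have : A ⊆ {0} := fun x _ => hG1 x (fun i hi => by omega)
    exact (Bornology.isBounded_singleton (x := (0 : Fin nx → ℝ))).subset this
  by_cases hnx : nx = 0
  · have : A ⊆ {0} := by
      intro x _
      funext j; exact absurd j.2 (by omega)
    exact (Bornology.isBounded_singleton (x := (0 : Fin nx → ℝ))).subset this
  -- main case
  haveI : Inhabited (Fin nx) := ⟨⟨0, Nat.pos_of_ne_zero hnx⟩⟩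
  haveI : Nontrivial (Fin nx → ℝ) := Pi.nontrivial
  set S1 := Finset.univ.filter fun i : Fin f => (i : ℕ) < f1 with hS1def
  have hS1 : S1.Nonempty :=
    ⟨⟨0, by omega⟩, Finset.mem_filter.mpr ⟨Finset.mem_univ _, by simpa using Nat.pos_of_ne_zero hf0⟩⟩
  set g : (Fin nx → ℝ) → ℝ := fun x => S1.sup' hS1 fun i => (G *ᵥ x) i with hg
  have hgcont : Continuous g := Continuous.finset_sup'_apply hS1 (fun i _ => hcont i)
  have hsph : IsCompact (Metric.sphere (0 : Fin nx → ℝ) 1) := isCompact_sphere _ _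
  have hsphne : (Metric.sphere (0 : Fin nx → ℝ) 1).Nonempty :=
    NormedSpace.sphere_nonempty.mpr zero_le_one
  obtain ⟨x₀, hx₀, hmin⟩ := hsph.exists_isMinOn hsphne hgcont.continuousOn
  have hε : 0 < g x₀ := by
    by_contra hcon
    push_neg at hcon
    have hx0 : x₀ = 0 := by
      refine hG1 x₀ fun i hi => ?_
      have hmem : i ∈ S1 := Finset.mem_filter.mpr ⟨Finset.mem_univ _, hi⟩
      exact le_trans (Finset.le_sup' (f := fun i => (G *ᵥ x₀) i) hmem) hcon
    rw [mem_sphere_iff_norm] at hx₀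
    rw [hx0] at hx₀
    simp at hx₀
  set ε := g x₀
  set Z := S1.sup' hS1 z with hZ
  refine (Metric.isBounded_closedBall (x := (0:Fin nx → ℝ)) (r := max (Z/ε) 0)).subset ?_
  intro x hx
  rw [Metric.mem_closedBall, dist_zero_right]
  by_cases hx0 : x = 0
  · simp [hx0]
  · have hnorm : ‖x‖ ≠ 0 := norm_ne_zero_iff.mpr hx0
    have hnpos : 0 < ‖x‖ := norm_pos_iff.mpr hx0
    set u := ‖x‖⁻¹ • x with hu
    have husph : u ∈ Metric.sphere (0 : Fin nx → ℝ) 1 := by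
      rw [mem_sphere_iff_norm, sub_zero, hu, norm_smul, norm_inv, norm_norm,
        inv_mul_cancel₀ hnorm]
    have hgu : ε ≤ g u := hmin husph
    obtain ⟨i, hiS, hieq⟩ := Finset.exists_mem_eq_sup' hS1 fun i => (G *ᵥ u) i
    have hGu : (G *ᵥ u) i = ‖x‖⁻¹ * (G *ᵥ x) i := by
      rw [hu, mulVec_smul]; rfl
    have hiA : (G *ᵥ x) i ≤ z i := hx i (Finset.mem_filter.mp hiS).2
    have hzZ : z i ≤ Z := Finset.le_sup' z hiS
    have key : ε * ‖x‖ ≤ Z := by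
      have : ε ≤ ‖x‖⁻¹ * (G *ᵥ x) i := by rw [← hGu, ← hieq]; exact hgu
      calc ε * ‖x‖ ≤ (‖x‖⁻¹ * (G *ᵥ x) i) * ‖x‖ := by nlinarith
        _ = (G *ᵥ x) i := by field_simp
        _ ≤ Z := le_trans hiA hzZ
    have : ‖x‖ ≤ Z / ε := (le_div_iff₀ hε).mpr (by linarith)
    exact le_trans this (le_max_left _ _)

private theorem stmt1_Pset_closed {nx f : ℕ} (G : Matrix (Fin f) (Fin nx) ℝ)
    (h : Fin f → ℝ) (z : Fin f → ℝ) : IsClosed (Pset G h z) := by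
  have : Pset G h z = ⋂ i : Fin f,
      {p : (Fin nx → ℝ) × ℝ | (G *ᵥ p.1) i + h i * p.2 ≤ z i} := by
    ext p; simp [Pset]
  rw [this]
  refine isClosed_iInter fun i => isClosed_le ?_ continuous_const
  have h1 : Continuous fun p : (Fin nx → ℝ) × ℝ => (G *ᵥ p.1) i := by
    simp only [mulVec, dotProduct]
    exact continuous_finset_sum _ fun j _ =>
      continuous_const.mul ((continuous_apply j).comp continuous_fst)
  exact h1.add (continuous_const.mul continuous_snd)

private theorem stmt1_Pset_convex {nx f : ℕ} (G : Matrix (Fin f) (Fin nx) ℝ)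
    (h : Fin f → ℝ) (z : Fin f → ℝ) : Convex ℝ (Pset G h z) := by
  intro p hp q hq a b ha hb hab i
  have hp' := hp i
  have hq' := hq i
  have hm : (G *ᵥ (a • p + b • q).1) i = a * (G *ᵥ p.1) i + b * (G *ᵥ q.1) i := by
    simp [mulVec_add, mulVec_smul, smul_eq_mul]
  rw [Pset, mem_setOf_eq] at *
  show (G *ᵥ (a • p + b • q).1) i + h i * (a • p + b • q).2 ≤ z i
  rw [hm]
  have h2 : (a • p + b • q).2 = a * p.2 + b * q.2 := rfl
  rw [h2]
  have e1 := mul_le_mul_of_nonneg_left hp' ha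
  have e2 := mul_le_mul_of_nonneg_left hq' hb
  have e3 := add_le_add e1 e2
  have hz : a * z i + b * z i = z i := by rw [← add_mul, hab, one_mul]
  rw [hz] at e3
  ring_nf at e3 ⊢
  linarith

private theorem stmt1_slice_eq {a b : EReal} (ha : a ≠ ⊥) (hb : b ≠ ⊥)
    (H : ∀ y : ℝ, a ≤ (y : EReal) ↔ b ≤ (y : EReal)) : a = b := by
  have key : ∀ a b : EReal, a ≠ ⊥ → b ≠ ⊥ →
      (∀ y : ℝ, a ≤ (y : EReal) → b ≤ (y : EReal)) → b ≤ a := by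
    intro a b ha hb H
    by_cases hat : a = ⊤
    · rw [hat]; exact le_top
    · have : a = ((a.toReal : ℝ) : EReal) := (EReal.coe_toReal hat ha).symm
      rw [this]
      exact H a.toReal (by rw [← this])
  exact le_antisymm (key b a hb ha fun y hy => (H y).mpr hy)
    (key a b ha hb fun y hy => (H y).mp hy)

end Stmt1Aux

/-- Remark 2: the explicit function
`M(x) = max_i (z₂ − G₂x)_i / (h₂)_i` on `{x | G₁x ≤ z₁}` (and `∞` otherwise)
satisfies `epi(M) = P(z)` and is the unique proper compact convex function with
this epigraph. -/
theorem stmt_1 {nx f : ℕ} (f1 : ℕ)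
    (G : Matrix (Fin f) (Fin nx) ℝ) (h : Fin f → ℝ)
    (hf1 : f1 < f)
    (hzero : ∀ i : Fin f, (i : ℕ) < f1 → h i = 0)
    (hneg : ∀ i : Fin f, f1 ≤ (i : ℕ) → h i < 0)
    (hG1 : ∀ x : Fin nx → ℝ, (∀ i : Fin f, (i : ℕ) < f1 → (G *ᵥ x) i ≤ 0) → x = 0)
    (z : Fin f → ℝ) (hne : (Pset G h z).Nonempty) :
    epiF (Mform f1 hf1 G h z) = Pset G h z ∧
      ProperCompactConvex (Mform f1 hf1 G h z) ∧
      ∀ M : (Fin nx → ℝ) → EReal,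
        ProperCompactConvex M → epiF M = Pset G h z → M = Mform f1 hf1 G h z := by
  have hepi := stmt1_epi_eq f1 G h hf1 hzero hneg z
  have hnb : ∀ x, Mform f1 hf1 G h z x ≠ ⊥ := by
    intro x
    rw [Mform]
    split
    · exact EReal.coe_ne_bot _
    · simp
  have hdom : domF (Mform f1 hf1 G h z)
      = {x : Fin nx → ℝ | ∀ i : Fin f, (i : ℕ) < f1 → (G *ᵥ x) i ≤ z i} := by
    ext x
    simp only [domF, mem_setOf_eq, Mform]
    split
    · next hc => simpa [EReal.coe_lt_top] using hc
    · next hc => simpa using hc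
  have hpcc : ProperCompactConvex (Mform f1 hf1 G h z) := by
    refine ⟨hnb, ?_, ?_, ?_, ?_⟩
    · obtain ⟨⟨x, y⟩, hp⟩ := hne
      refine ⟨x, ?_⟩
      rw [hdom]
      intro i hi
      have := hp i
      rw [hzero i hi] at this
      simpa using this
    · rw [hdom]
      exact stmt1_dom_compact f1 hf1 G hG1 z
    · rw [hepi]
      exact stmt1_Pset_closed G h z
    · rw [hepi]
      exact stmt1_Pset_convex G h z
  refine ⟨hepi, hpcc, ?_⟩
  intro M hM hMepi
  funext x
  refine stmt1_slice_eq (hM.1 x) (hnb x) fun y => ?_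
  have h1 : (x, y) ∈ epiF M ↔ (x, y) ∈ epiF (Mform f1 hf1 G h z) := by
    rw [hMepi, hepi]
  exact h1
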